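/- Let f_1,…,f_r ∈ K[x_1,…,x_n] be homogeneous of degree t, I = ⟨f_1,…,f_r⟩, d ≥ 0, and s ≥ 0. Then I^{(t+d)} contains no nonzero polynomial with at most s terms if and only if for every subset S ⊆ M_{t+d}^n with |S| = |M_{t+d}^n| − s one has Span{p_α : α ∈ S} = Span{p_α : α ∈ M_{t+d}^n} inside the dual space of the space of r-tuples of degree-d homogeneous polynomials. -/

import Mathlib

/-- The linear form `p_α` extracting the coefficient of `x^α` from the polynomial
expression `∑ i, g i * f i`, viewed as a linear form on the space of `r`-tuples of
homogeneous polynomials of degree `d`. -/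
noncomputable def pForm {K : Type*} [Field K] {n r : ℕ}
    (f : Fin r → MvPolynomial (Fin n) K) (d : ℕ) (α : Fin n →₀ ℕ) :
    (Fin r → ↥(MvPolynomial.homogeneousSubmodule (Fin n) K d)) →ₗ[K] K where
  toFun g := MvPolynomial.coeff α (∑ i, (g i : MvPolynomial (Fin n) K) * f i)
  map_add' g h := by
    simp [add_mul, Finset.sum_add_distrib]
  map_smul' c g := by
    simp [smul_mul_assoc, ← Finset.smul_sum, MvPolynomial.coeff_smul, smul_eq_mul]

open MvPolynomial in
/-- **Lemma 2.5.**  Let `f 1, …, f r` be homogeneous of degree `t`, `I = ⟨f 1, …, f r⟩`,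
`d ≥ 0` and `s ≥ 0`.  The degree-`(t+d)` component `I^{(t+d)}` contains no nonzero
polynomial with at most `s` terms if and only if for every `S ⊆ M_{t+d}^n` with
`|S| = |M_{t+d}^n| - s` the spans of `{p_α : α ∈ S}` and `{p_α : α ∈ M_{t+d}^n}`
coincide in the dual space. -/
theorem no_short_polynomial_iff_spans_eq {K : Type*} [Field K] {n r t d s : ℕ}
    (f : Fin r → MvPolynomial (Fin n) K) (hf : ∀ i, (f i).IsHomogeneous t)
    (M : Set (Fin n →₀ ℕ)) (hM : M = {α | (α.sum fun _ e => e) = t + d}) :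
    (∀ h : MvPolynomial (Fin n) K, h ∈ Ideal.span (Set.range f) →
        h.IsHomogeneous (t + d) → h.support.card ≤ s → h = 0) ↔
      (∀ S ⊆ M, S.ncard = M.ncard - s →
        Submodule.span K (pForm f d '' S) = Submodule.span K (pForm f d '' M)) := by
  classical
  -- basic facts
  have hdeg : ∀ α : Fin n →₀ ℕ, (α.sum fun _ e => e) = α.degree := fun _ => rfl
  have hdegadd : ∀ a b : Fin n →₀ ℕ, (a + b).degree = a.degree + b.degree := by
    intro a b; rw [Finsupp.degree_eq_weight_one]; exact map_add _ a b
  have hMdeg : M = {α : Fin n →₀ ℕ | α.degree = t + d} := by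
    rw [hM]; ext α; simp [hdeg]
  have hcoeff_ne : ∀ {p : MvPolynomial (Fin n) K} {m : ℕ} {α : Fin n →₀ ℕ},
      p.IsHomogeneous m → coeff α p ≠ 0 → α.degree = m := by
    intro p m α hp hα
    by_contra hne
    exact hα (hp.coeff_eq_zero hne)
  -- M is finite
  have hfin0 : {α : Fin n →₀ ℕ | α.degree = t + d}.Finite := by
    rw [← Set.finite_coe_iff]
    refine Finite.of_injective
      (fun a : ↥{α : Fin n →₀ ℕ | α.degree = t + d} =>
        (fun i => (⟨(a : Fin n →₀ ℕ) i, ?_⟩ : Fin (t + d + 1)))) ?_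
    · have h1 : (a : Fin n →₀ ℕ) i ≤ (a : Fin n →₀ ℕ).degree := Finsupp.le_degree i _
      have h2 : (a : Fin n →₀ ℕ).degree = t + d := a.2
      omega
    · intro a b hab
      ext i
      have := congrFun hab i
      exact congrArg Fin.val this
  have hMfin : M.Finite := hMdeg ▸ hfin0
  -- pForm unfolding
  have hp : ∀ (α : Fin n →₀ ℕ) (g : Fin r → ↥(homogeneousSubmodule (Fin n) K d)),
      pForm f d α g = coeff α (∑ i, (g i : MvPolynomial (Fin n) K) * f i) := fun _ _ => rfl
  -- sums of the form ∑ gᵢ fᵢ are homogeneous of degree t+d and lie in the ideal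
  have hhomsum : ∀ g : Fin r → ↥(homogeneousSubmodule (Fin n) K d),
      (∑ i, (g i : MvPolynomial (Fin n) K) * f i).IsHomogeneous (t + d) := by
    intro g
    refine IsHomogeneous.sum _ _ _ (fun i _ => ?_)
    have hg : ((g i : MvPolynomial (Fin n) K)).IsHomogeneous d :=
      (mem_homogeneousSubmodule _ _).mp (g i).2
    have := hg.mul (hf i)
    rwa [add_comm] at this
  have hidsum : ∀ g : Fin r → ↥(homogeneousSubmodule (Fin n) K d),
      (∑ i, (g i : MvPolynomial (Fin n) K) * f i) ∈ Ideal.span (Set.range f) := by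
    intro g
    refine Ideal.sum_mem _ (fun i _ => ?_)
    exact Ideal.mul_mem_left _ _ (Ideal.subset_span ⟨i, rfl⟩)
  -- homogeneous component of c * fᵢ
  have hcomp : ∀ (c : MvPolynomial (Fin n) K) (i : Fin r),
      homogeneousComponent (t + d) (c * f i) = homogeneousComponent d c * f i := by
    intro c i
    ext α
    rw [coeff_homogeneousComponent, coeff_mul, coeff_mul]
    split_ifs with h
    · refine Finset.sum_congr rfl (fun x hx => ?_)
      rw [coeff_homogeneousComponent]
      by_cases h2 : coeff x.2 (f i) = 0
      · simp [h2]
      · have ht2 : x.2.degree = t := hcoeff_ne (hf i) h2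
        have hxa : x.1 + x.2 = α := Finset.HasAntidiagonal.mem_antidiagonal.mp hx
        have : x.1.degree + x.2.degree = t + d := by rw [← hdegadd, hxa, h]
        rw [if_pos (by omega)]
    · refine (Finset.sum_eq_zero (fun x hx => ?_)).symm
      rw [coeff_homogeneousComponent]
      split_ifs with h1
      · by_cases h2 : coeff x.2 (f i) = 0
        · simp [h2]
        · exfalso
          have ht2 : x.2.degree = t := hcoeff_ne (hf i) h2
          have hxa : x.1 + x.2 = α := Finset.HasAntidiagonal.mem_antidiagonal.mp hx
          have : x.1.degree + x.2.degree = α.degree := by rw [← hdegadd, hxa]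
          omega
      · simp
  -- decomposition of homogeneous ideal elements
  have hmem : ∀ h : MvPolynomial (Fin n) K, h ∈ Ideal.span (Set.range f) →
      h.IsHomogeneous (t + d) →
      ∃ g : Fin r → ↥(homogeneousSubmodule (Fin n) K d),
        h = ∑ i, (g i : MvPolynomial (Fin n) K) * f i := by
    intro h hmem hhom
    obtain ⟨c, hc⟩ := Ideal.mem_span_range_iff_exists_fun.mp hmem
    refine ⟨fun i => ⟨homogeneousComponent d (c i), homogeneousComponent_mem d (c i)⟩, ?_⟩
    have h1 : homogeneousComponent (t + d) h = h := by
      rw [homogeneousComponent_of_mem ((mem_homogeneousSubmodule _ _).mpr hhom), if_pos rfl]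
    calc h = homogeneousComponent (t + d) h := h1.symm
      _ = homogeneousComponent (t + d) (∑ i, c i * f i) := by rw [hc]
      _ = ∑ i, homogeneousComponent (t + d) (c i * f i) := map_sum _ _ _
      _ = ∑ i, homogeneousComponent d (c i) * f i := by
          exact Finset.sum_congr rfl (fun i _ => hcomp (c i) i)
  constructor
  · -- no short polynomial → spans equal
    intro H S hS hcard
    refine le_antisymm (Submodule.span_mono (Set.image_mono hS)) ?_
    rw [Submodule.span_le]
    rintro _ ⟨β, hβ, rfl⟩
    haveI : Finite ↥S := (hMfin.subset hS).to_subtype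
    have hker : (⨅ a : ↥S, LinearMap.ker (pForm f d a)) ≤ LinearMap.ker (pForm f d β) := by
      intro g hg
      simp only [Submodule.mem_iInf, LinearMap.mem_ker] at hg ⊢
      set h : MvPolynomial (Fin n) K := ∑ i, (g i : MvPolynomial (Fin n) K) * f i with hh
      have hsupp : ↑h.support ⊆ M \ S := by
        intro α hα
        have hαne : coeff α h ≠ 0 := mem_support_iff.mp hα
        constructor
        · rw [hMdeg]; exact hcoeff_ne (hhomsum g) hαne
        · intro hαS
          exact hαne (hg ⟨α, hαS⟩)
      have hcard' : h.support.card ≤ s := by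
        have e1 : (↑h.support : Set _).ncard ≤ (M \ S).ncard :=
          Set.ncard_le_ncard hsupp hMfin.diff
        rw [Set.ncard_coe_finset] at e1
        have e2 : (M \ S).ncard = M.ncard - S.ncard := Set.ncard_diff hS (hMfin.subset hS)
        have e3 : S.ncard ≤ M.ncard := Set.ncard_le_ncard hS hMfin
        omega
      have := H h (hidsum g) (hhomsum g) hcard'
      rw [hp]
      rw [← hh, this, coeff_zero]
    have hmm := mem_span_of_iInf_ker_le_ker (L := fun a : ↥S => pForm f d a) hker
    rwa [← Set.image_eq_range] at hmm
  · -- spans equal → no short polynomial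
    intro H h hid hhom hcard
    obtain ⟨g, hg⟩ := hmem h hid hhom
    have hsupp : ↑h.support ⊆ M := by
      intro α hα
      rw [hMdeg]
      exact hcoeff_ne hhom (mem_support_iff.mp hα)
    have hdiff : M.ncard - s ≤ (M \ ↑h.support).ncard := by
      have e2 := Set.ncard_diff hsupp h.support.finite_toSet
      rw [Set.ncard_coe_finset] at e2
      omega
    obtain ⟨S, hSsub, hScard⟩ := Set.exists_subset_card_eq hdiff
    have hspan := H S (hSsub.trans Set.diff_subset) hScard
    -- evaluation at g kills span of S, hence span of M
    have hkerle : Submodule.span K (pForm f d '' M) ≤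
        LinearMap.ker (LinearMap.applyₗ g) := by
      rw [← hspan, Submodule.span_le]
      rintro _ ⟨α, hα, rfl⟩
      have hαS := hSsub hα
      have : coeff α h = 0 := by
        by_contra hc
        exact hαS.2 (mem_support_iff.mpr hc)
      simp only [SetLike.mem_coe, LinearMap.mem_ker, LinearMap.applyₗ_apply_apply]
      rw [hp, ← hg, this]
    -- conclude h = 0
    by_contra h0
    obtain ⟨α, hα⟩ := Finset.nonempty_iff_ne_empty.mpr
      (fun he => h0 (support_eq_empty.mp he))
    have hαM : α ∈ M := hsupp hα
    have : pForm f d α ∈ Submodule.span K (pForm f d '' M) :=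
      Submodule.subset_span ⟨α, hαM, rfl⟩
    have := hkerle this
    simp only [LinearMap.mem_ker, LinearMap.applyₗ_apply_apply] at this
    rw [hp, ← hg] at this
    exact mem_support_iff.mp hα this
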